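/- Let L = L₀ + L₁ q act on ℓ²-sequences valued in ℝⁿ, where L₀ is an invertible lower triangular real n×n matrix and L₁ is lower triangular with zero diagonal (so L₀⁻¹L₁ is nilpotent). Fix r ∈ (0,1), K₂ ∈ ℝ^{n×m}, x₀ ∈ ℝ^m. If z solves L L* z = (r⁰K₂x₀, r¹K₂x₀, r²K₂x₀, …), then (L₀ + L₁ r) L₀ᵀ z[0] = K₂ x₀. -/
import Mathlib

noncomputable section

/-- Let `L = L₀ + L₁ q` act on `ℓ²` sequences valued in `ℝⁿ`, with `L₀` invertible lower
triangular and `L₁` lower triangular with zero diagonal, and let `L* = L₀ᵀ + L₁ᵀ q*`.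
Fix `r ∈ (0,1)`. If `z ∈ ℓ²` solves `L L* z = (r⁰ K₂ x₀, r¹ K₂ x₀, r² K₂ x₀, …)`, then
`(L₀ + r L₁) L₀ᵀ z[0] = K₂ x₀.`  Here `v = L* z` is written out explicitly:
`v k = L₀ᵀ z k + (if k = 0 then 0 else L₁ᵀ z (k−1))`, and the equation `L v = w` reads
`L₀ v k + L₁ v (k+1) = r^k K₂ x₀`. -/
theorem lqr_back_substitution_first_entry
    (n m : ℕ) (L₀ L₁ : Matrix (Fin n) (Fin n) ℝ)
    (hL₀inv : IsUnit L₀)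
    (hL₀tri : ∀ i j : Fin n, i < j → L₀ i j = 0)
    (hL₁tri : ∀ i j : Fin n, i < j → L₁ i j = 0)
    (hL₁diag : ∀ i : Fin n, L₁ i i = 0)
    (r : ℝ) (hr0 : 0 < r) (hr1 : r < 1)
    (K₂ : Matrix (Fin n) (Fin m) ℝ) (x₀ : Fin m → ℝ)
    (z : ℕ → EuclideanSpace ℝ (Fin n)) (hz : Memℓp z 2)
    (v : ℕ → (Fin n → ℝ))
    (hv : ∀ k : ℕ, v k =
      L₀.transpose.mulVec (z k) + (if k = 0 then 0 else L₁.transpose.mulVec (z (k - 1))))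
    (hsol : ∀ k : ℕ, L₀.mulVec (v k) + L₁.mulVec (v (k + 1)) = r ^ k • K₂.mulVec x₀) :
    ((L₀ + r • L₁) * L₀.transpose).mulVec (z 0) = K₂.mulVec x₀ := by
  -- diagonal of L₀ is nonzero
  have hdet : L₀.det = ∏ i, L₀ i i :=
    Matrix.det_of_lowerTriangular L₀ (fun i j h => hL₀tri i j h)
  have hdetne : L₀.det ≠ 0 := by
    have := (Matrix.isUnit_iff_isUnit_det L₀).mp hL₀inv
    exact IsUnit.ne_zero this
  have hdiag : ∀ i : Fin n, L₀ i i ≠ 0 := by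
    intro i hi
    apply hdetne
    rw [hdet]
    exact Finset.prod_eq_zero (Finset.mem_univ i) hi
  -- define the difference sequence
  set u : ℕ → Fin n → ℝ := fun k => v (k + 1) - r • v k with hu_def
  have hu : ∀ k, L₀.mulVec (u k) + L₁.mulVec (u (k + 1)) = 0 := by
    intro k
    have h1 := hsol (k + 1)
    have h2 := hsol k
    have key : (L₀.mulVec (v (k + 1)) + L₁.mulVec (v (k + 2)))
        - r • (L₀.mulVec (v k) + L₁.mulVec (v (k + 1))) = 0 := by
      rw [show k + 1 + 1 = k + 2 from rfl] at h1
      rw [h1, h2, smul_smul, ← pow_succ', sub_self]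
    calc L₀.mulVec (u k) + L₁.mulVec (u (k + 1))
        = (L₀.mulVec (v (k + 1)) + L₁.mulVec (v (k + 2)))
          - r • (L₀.mulVec (v k) + L₁.mulVec (v (k + 1))) := by
          simp only [hu_def, Matrix.mulVec_sub, Matrix.mulVec_smul, smul_add]
          abel
      _ = 0 := key
  -- u vanishes, by strong induction on the coordinate
  have hzero : ∀ (N : ℕ) (i : Fin n), (i : ℕ) = N → ∀ k, u k i = 0 := by
    intro N
    induction N using Nat.strong_induction_on with
    | _ N ih =>
      intro i hi k
      have hcomp := congrFun (hu k) i
      simp only [Pi.add_apply, Pi.zero_apply, Matrix.mulVec, dotProduct] at hcomp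
      have ihj : ∀ j : Fin n, j < i → ∀ k', u k' j = 0 := by
        intro j hlt k'
        have hjN : (j : ℕ) < N := by
          rw [← hi]; exact hlt
        exact ih (j : ℕ) hjN j rfl k'
      have hsum1 : ∑ j, L₀ i j * u k j = L₀ i i * u k i := by
        refine Finset.sum_eq_single i (fun j _ hji => ?_) (fun h => absurd (Finset.mem_univ i) h)
        rcases lt_or_gt_of_ne hji with hlt | hgt
        · rw [ihj j hlt k, mul_zero]
        · rw [hL₀tri i j hgt, zero_mul]
      have hsum2 : ∑ j, L₁ i j * u (k + 1) j = 0 := by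
        refine Finset.sum_eq_zero fun j _ => ?_
        rcases lt_trichotomy j i with hlt | heq | hgt
        · rw [ihj j hlt (k + 1), mul_zero]
        · rw [heq, hL₁diag i, zero_mul]
        · rw [hL₁tri i j hgt, zero_mul]
      rw [hsum1, hsum2, add_zero] at hcomp
      exact (mul_eq_zero.mp hcomp).resolve_left (hdiag i)
  have hu0 : v 1 = r • v 0 := by
    have h : u 0 = 0 := funext fun i => hzero (i : ℕ) i rfl 0
    simp only [hu_def] at h
    exact sub_eq_zero.mp h
  -- now the k = 0 equation
  have h0 := hsol 0
  have hv0 : v 0 = L₀.transpose.mulVec (z 0) := by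
    rw [hv 0]; simp
  rw [hu0, hv0, pow_zero, one_smul, Matrix.mulVec_smul] at h0
  rw [← Matrix.mulVec_mulVec, Matrix.add_mulVec, Matrix.smul_mulVec]
  exact h0
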